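/- For every natural number n ≥ 1, the product (⌊n/2⌋+1)(⌊n/2⌋+2)···n can be written as 2^(⌊n/2⌋) · k for some odd positive integer k. -/

import Mathlib

theorem stmt_2 (n : ℕ) (hn : 1 ≤ n) :
    ∃ k : ℕ, 0 < k ∧ Odd k ∧
      ∏ i ∈ Finset.Icc (n / 2 + 1) n, i = 2 ^ (n / 2) * k := by
  haveI : Fact (Nat.Prime 2) := ⟨Nat.prime_two⟩
  set m := n / 2 with hm
  set P := ∏ i ∈ Finset.Icc (m + 1) n, i with hP
  have hPpos : 0 < P := Finset.prod_pos (fun i hi => by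
    have := (Finset.mem_Icc.mp hi).1; omega)
  have hfact : P * Nat.factorial m = Nat.factorial n := by
    rw [← Finset.prod_Ico_id_eq_factorial n, ← Finset.prod_Ico_id_eq_factorial m, hP,
      Finset.Ico_add_one_right_eq_Icc, Finset.Ico_add_one_right_eq_Icc, Finset.Icc_add_one_left_eq_Ioc,
      show (1 : ℕ) = 0 + 1 from rfl, Finset.Icc_add_one_left_eq_Ioc, Finset.Icc_add_one_left_eq_Ioc, mul_comm]
    exact Finset.prod_Ioc_consecutive _ (Nat.zero_le m) (Nat.div_le_self n 2)
  have hv : padicValNat 2 (Nat.factorial n) = m + padicValNat 2 (Nat.factorial m) := by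
    have h1 := sub_one_mul_padicValNat_factorial (p := 2) n
    have h2 := sub_one_mul_padicValNat_factorial (p := 2) m
    have hd : Nat.digits 2 n = n % 2 :: Nat.digits 2 m :=
      Nat.digits_def' (by norm_num) (by omega)
    have hs : (Nat.digits 2 n).sum = n % 2 + (Nat.digits 2 m).sum := by rw [hd]; simp
    have hle := Nat.digit_sum_le 2 m
    have hle2 := Nat.digit_sum_le 2 n
    omega
  have hvP : padicValNat 2 P = m := by
    have := padicValNat.mul (p := 2) hPpos.ne' (Nat.factorial_ne_zero m)
    rw [hfact, hv] at this
    omega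
  refine ⟨ordCompl[2] P, Nat.ordCompl_pos 2 hPpos.ne', ?_, ?_⟩
  · rw [Nat.not_even_iff_odd.symm, even_iff_two_dvd]
    exact Nat.not_dvd_ordCompl Nat.prime_two hPpos.ne'
  · rw [← Nat.factorization_def P Nat.prime_two] at hvP
    rw [← hvP]
    exact (Nat.ordProj_mul_ordCompl_eq_self P 2).symm
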